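/- Let p be a prime, Λ = ℤ_p[[T]], and let f ∈ Λ be nonzero with T² not dividing f. Write f = T^r · g where r ∈ {0, 1} and the constant coefficient g(0) is nonzero. Set X = Λ/(f). Then the natural map from the kernel of multiplication by T on X to the coinvariants X/TX (sending an element to its residue class) is injective, and its cokernel is a finite group of cardinality p^{v_p(g(0))}, where v_p denotes the p-adic valuation on ℤ_p. -/

import Mathlib

set_option synthInstance.maxHeartbeats 1000000
set_option maxHeartbeats 4000000

open PowerSeries in
lemma aux_ker_eq (p : ℕ) [Fact p.Prime] (f g : PowerSeries ℤ_[p]) (r : ℕ) (hr : r ≤ 1)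
    (hf : f = (X : PowerSeries ℤ_[p]) ^ r * g)
    (hg0 : constantCoeff (R := ℤ_[p]) g ≠ 0)
    (φ : (PowerSeries ℤ_[p] ⧸ Ideal.span {f}) →ₗ[PowerSeries ℤ_[p]]
        (PowerSeries ℤ_[p] ⧸ Ideal.span {f}))
    (hφ : φ = LinearMap.lsmul (PowerSeries ℤ_[p]) (PowerSeries ℤ_[p] ⧸ Ideal.span {f})
        (X : PowerSeries ℤ_[p])) :
    LinearMap.ker φ = Submodule.map (Ideal.span {f}).mkQ (Ideal.span {g}) := by
  subst hφ
  ext x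
  obtain ⟨h, rfl⟩ := Submodule.mkQ_surjective _ x
  simp only [LinearMap.mem_ker, LinearMap.lsmul_apply, Submodule.mkQ_apply, Submodule.mem_map]
  rw [← Submodule.Quotient.mk_smul, smul_eq_mul, Submodule.Quotient.mk_eq_zero,
    Ideal.mem_span_singleton]
  constructor
  · rintro ⟨m, hm⟩
    rw [hf] at hm
    have hgh : g ∣ h := by
      interval_cases r
      · simp only [pow_zero, one_mul] at hm
        have hm0 : constantCoeff (R := ℤ_[p]) m = 0 := by
          have h0 := congrArg (constantCoeff (R := ℤ_[p])) hm
          simp only [map_mul, constantCoeff_X, zero_mul] at h0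
          rcases mul_eq_zero.mp h0.symm with h' | h'
          · exact absurd h' hg0
          · exact h'
        obtain ⟨m', rfl⟩ := X_dvd_iff.mpr hm0
        refine ⟨m', mul_left_cancel₀ X_ne_zero ?_⟩
        rw [hm]; ring
      · refine ⟨m, mul_left_cancel₀ X_ne_zero ?_⟩
        rw [hm]; ring
    exact ⟨h, Ideal.mem_span_singleton.mpr hgh, rfl⟩
  · rintro ⟨w, hw, hweq⟩
    obtain ⟨t, rfl⟩ := Ideal.mem_span_singleton.mp hw
    have hsub : f ∣ (g * t - h) := by
      rw [← Ideal.mem_span_singleton]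
      exact (Submodule.Quotient.eq _).mp hweq
    have hXw : f ∣ X * (g * t) := by
      rw [hf]
      have h1 : (X : PowerSeries ℤ_[p]) ^ r ∣ X := by
        simpa using pow_dvd_pow (X : PowerSeries ℤ_[p]) hr
      calc (X : PowerSeries ℤ_[p]) ^ r * g ∣ X * g := mul_dvd_mul h1 dvd_rfl
        _ ∣ X * (g * t) := ⟨t, by ring⟩
    have heq : X * h = X * (g * t) - X * (g * t - h) := by ring
    rw [heq]
    exact dvd_sub hXw (Dvd.dvd.mul_left hsub X)

open PowerSeries in
lemma aux_range_eq (p : ℕ) [Fact p.Prime] (f : PowerSeries ℤ_[p])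
    (φ : (PowerSeries ℤ_[p] ⧸ Ideal.span {f}) →ₗ[PowerSeries ℤ_[p]]
        (PowerSeries ℤ_[p] ⧸ Ideal.span {f}))
    (hφ : φ = LinearMap.lsmul (PowerSeries ℤ_[p]) (PowerSeries ℤ_[p] ⧸ Ideal.span {f})
        (X : PowerSeries ℤ_[p])) :
    LinearMap.range φ = Submodule.map (Ideal.span {f}).mkQ (Ideal.span {X}) := by
  subst hφ
  ext x
  simp only [LinearMap.mem_range, LinearMap.lsmul_apply, Submodule.mem_map]
  constructor
  · rintro ⟨y, rfl⟩
    obtain ⟨h, rfl⟩ := Submodule.mkQ_surjective _ y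
    refine ⟨X * h, Ideal.mem_span_singleton.mpr ⟨h, rfl⟩, ?_⟩
    rw [Submodule.mkQ_apply, Submodule.mkQ_apply, ← Submodule.Quotient.mk_smul, smul_eq_mul]
  · rintro ⟨w, hw, rfl⟩
    obtain ⟨t, rfl⟩ := Ideal.mem_span_singleton.mp hw
    refine ⟨(Ideal.span {f}).mkQ t, ?_⟩
    rw [Submodule.mkQ_apply, Submodule.mkQ_apply, ← Submodule.Quotient.mk_smul, smul_eq_mul]

open PowerSeries in
lemma aux_ker_const (p : ℕ) [Fact p.Prime] (g : PowerSeries ℤ_[p]) :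
    RingHom.ker ((Ideal.Quotient.mk (Ideal.span {constantCoeff (R := ℤ_[p]) g})).comp
      (constantCoeff (R := ℤ_[p]))) = Ideal.span {(X : PowerSeries ℤ_[p]), g} := by
  ext a
  rw [RingHom.mem_ker, RingHom.comp_apply, Ideal.Quotient.eq_zero_iff_mem,
    Ideal.mem_span_singleton, Ideal.mem_span_pair]
  constructor
  · rintro ⟨t, ht⟩
    obtain ⟨u', hu'⟩ : (X : PowerSeries ℤ_[p]) ∣ (a - C (R := ℤ_[p]) (constantCoeff (R := ℤ_[p]) a)) :=
      X_dvd_iff.mpr (by simp)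
    obtain ⟨w, hw⟩ : (X : PowerSeries ℤ_[p]) ∣ (g - C (R := ℤ_[p]) (constantCoeff (R := ℤ_[p]) g)) :=
      X_dvd_iff.mpr (by simp)
    refine ⟨u' - C (R := ℤ_[p]) t * w, C (R := ℤ_[p]) t, ?_⟩
    have hCa : C (R := ℤ_[p]) (constantCoeff (R := ℤ_[p]) a) = C (R := ℤ_[p]) (constantCoeff (R := ℤ_[p]) g) * C (R := ℤ_[p]) t := by
      rw [← map_mul, ht]
    have h1 : a = X * u' + C (R := ℤ_[p]) (constantCoeff (R := ℤ_[p]) a) := by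
      rw [← hu']; ring
    have h2 : C (R := ℤ_[p]) (constantCoeff (R := ℤ_[p]) g) = g - X * w := by rw [← hw]; ring
    rw [h1, hCa, h2]; ring
  · rintro ⟨u, v, rfl⟩
    exact ⟨constantCoeff (R := ℤ_[p]) v, by simp [mul_comm]⟩

lemma aux_span_c (p : ℕ) [Fact p.Prime] (c : ℤ_[p]) (hc : c ≠ 0) :
    Ideal.span {c} = Ideal.span {(p : ℤ_[p]) ^ c.valuation} := by
  apply Ideal.span_singleton_eq_span_singleton.mpr
  exact Associated.symm ⟨PadicInt.unitCoeff hc, by rw [mul_comm]; exact (PadicInt.unitCoeff_spec hc).symm⟩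

noncomputable def aux_zmod_equiv (p : ℕ) [Fact p.Prime] (n : ℕ) :
    (ℤ_[p] ⧸ Ideal.span {(p : ℤ_[p]) ^ n}) ≃+* ZMod (p ^ n) :=
  (Ideal.quotEquivOfEq (PadicInt.ker_toZModPow n).symm).trans
    (RingHom.quotientKerEquivOfSurjective (ZMod.ringHom_surjective _))

set_option maxHeartbeats 1000000 in
/-- Let `f = T^r * g ∈ Λ = ℤ_[p][[T]]` with `r ∈ {0, 1}` and
`g(0) ≠ 0` (so `T² ∤ f`), and set `X = Λ/(f)`. The natural map from the kernel
of multiplication by `T` on `X` to the coinvariants `X/TX` is injective, and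
its cokernel is a finite group of cardinality `p^(v_p(g(0)))`. -/
theorem truncated_euler_char_eq_norm_inv_constant_term
    (p : ℕ) [Fact p.Prime] (f g : PowerSeries ℤ_[p]) (r : ℕ) (hr : r ≤ 1)
    (hf : f = (PowerSeries.X : PowerSeries ℤ_[p]) ^ r * g)
    (hg0 : PowerSeries.constantCoeff (R := ℤ_[p]) g ≠ 0)
    (φ : (PowerSeries ℤ_[p] ⧸ Ideal.span {f}) →ₗ[PowerSeries ℤ_[p]]
        (PowerSeries ℤ_[p] ⧸ Ideal.span {f}))
    (hφ : φ = LinearMap.lsmul (PowerSeries ℤ_[p]) (PowerSeries ℤ_[p] ⧸ Ideal.span {f})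
        (PowerSeries.X : PowerSeries ℤ_[p]))
    (ψ : LinearMap.ker φ →ₗ[PowerSeries ℤ_[p]]
        ((PowerSeries ℤ_[p] ⧸ Ideal.span {f}) ⧸ LinearMap.range φ))
    (hψ : ψ = (LinearMap.range φ).mkQ.comp (LinearMap.ker φ).subtype) :
    Function.Injective ψ ∧
      Finite (((PowerSeries ℤ_[p] ⧸ Ideal.span {f}) ⧸ LinearMap.range φ) ⧸
        LinearMap.range ψ) ∧
      Nat.card (((PowerSeries ℤ_[p] ⧸ Ideal.span {f}) ⧸ LinearMap.range φ) ⧸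
          LinearMap.range ψ) =
        p ^ PadicInt.valuation (PowerSeries.constantCoeff (R := ℤ_[p]) g) := by
  have hker := aux_ker_eq p f g r hr hf hg0 φ hφ
  have hrange := aux_range_eq p f φ hφ
  have hinj : Function.Injective ψ := by
    rw [hψ, ← LinearMap.ker_eq_bot, LinearMap.ker_comp, Submodule.ker_mkQ,
      Submodule.eq_bot_iff]
    rintro ⟨x, hxker⟩ hx
    simp only [Submodule.mem_comap, Submodule.coe_subtype] at hx
    refine Subtype.ext ?_
    show x = 0
    rw [hker] at hxker
    rw [hrange] at hx
    obtain ⟨a', ha'mem, rfl⟩ := hxker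
    obtain ⟨a, rfl⟩ := Ideal.mem_span_singleton.mp ha'mem
    obtain ⟨b', hb'mem, hb'eq⟩ := hx
    obtain ⟨b, rfl⟩ := Ideal.mem_span_singleton.mp hb'mem
    rw [Submodule.mkQ_apply, Submodule.mkQ_apply, Submodule.Quotient.eq] at hb'eq
    obtain ⟨c, hc⟩ := Ideal.mem_span_singleton.mp hb'eq
    rw [Submodule.mkQ_apply, Submodule.Quotient.mk_eq_zero, Ideal.mem_span_singleton]
    interval_cases r
    · rw [hf]; simpa using dvd_mul_right g a
    · have ha0 : PowerSeries.constantCoeff (R := ℤ_[p]) a = 0 := by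
        have h0 := congrArg (PowerSeries.constantCoeff (R := ℤ_[p])) hc
        rw [hf] at h0
        simp only [map_sub, map_mul, PowerSeries.constantCoeff_X, zero_mul, pow_one,
          zero_sub, neg_eq_zero] at h0
        rcases mul_eq_zero.mp h0 with h' | h'
        · exact absurd h' hg0
        · exact h'
      obtain ⟨a2, rfl⟩ := PowerSeries.X_dvd_iff.mpr ha0
      rw [hf]
      exact ⟨a2, by ring⟩
  have hrngψ : LinearMap.range ψ = (LinearMap.ker φ).map (LinearMap.range φ).mkQ := by
    rw [hψ, LinearMap.range_comp, Submodule.range_subtype]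
  have hsup : LinearMap.range φ ⊔ LinearMap.ker φ
      = Submodule.map (Ideal.span {f}).mkQ
        (Ideal.span {(PowerSeries.X : PowerSeries ℤ_[p]), g}) := by
    rw [hrange, hker, ← Submodule.map_sup, Ideal.span_insert]
  have hIJ : (Ideal.span {f} : Ideal (PowerSeries ℤ_[p]))
      ⊔ Ideal.span {(PowerSeries.X : PowerSeries ℤ_[p]), g}
      = Ideal.span {(PowerSeries.X : PowerSeries ℤ_[p]), g} := by
    rw [sup_eq_right, Ideal.span_le, Set.singleton_subset_iff, hf]
    exact Ideal.mul_mem_left _ _ (Ideal.subset_span (by simp))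
  set n := PadicInt.valuation (PowerSeries.constantCoeff (R := ℤ_[p]) g) with hn
  have E : (((PowerSeries ℤ_[p] ⧸ Ideal.span {f}) ⧸ LinearMap.range φ) ⧸
      LinearMap.range ψ) ≃ ZMod (p ^ n) := by
    rw [hrngψ]
    refine (Submodule.quotientQuotientEquivQuotientSup (LinearMap.range φ)
      (LinearMap.ker φ)).toEquiv.trans ?_
    rw [hsup]
    refine (Submodule.quotientQuotientEquivQuotientSup _ _).toEquiv.trans ?_
    rw [hIJ]
    refine (Ideal.quotEquivOfEq (aux_ker_const p g).symm).toEquiv.trans ?_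
    have hsurj : Function.Surjective
        ((Ideal.Quotient.mk (Ideal.span {PowerSeries.constantCoeff (R := ℤ_[p]) g})).comp
          (PowerSeries.constantCoeff (R := ℤ_[p]))) := by
      intro b
      obtain ⟨y, rfl⟩ := Ideal.Quotient.mk_surjective b
      exact ⟨PowerSeries.C (R := ℤ_[p]) y, by simp⟩
    refine (RingHom.quotientKerEquivOfSurjective hsurj).toEquiv.trans ?_
    rw [aux_span_c p _ hg0]
    exact (aux_zmod_equiv p n).toEquiv
  haveI : NeZero (p ^ n) := ⟨pow_ne_zero n (Nat.Prime.ne_zero Fact.out)⟩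
  refine ⟨hinj, Finite.of_equiv _ E.symm, ?_⟩
  rw [Nat.card_congr E, Nat.card_zmod]
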